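/- Let X be a geodesic δ-hyperbolic metric space. Let A be a hyperbolic isometry of X, let L : ℝ → X be a geodesic from A⁻ to A⁺, and set o = L(0). Let B be an isometry of X with B(A⁺) = A⁻, encoded by: the Gromov products (B Aⁿ o | A⁻ᵐ o)_o tend to +∞ as min(n,m) → +∞. Set N = (1 / l_S(A)) · max{ 3·d(Bo, o) + 18δ , 5·d(Bo, o) + 10δ }. Then for every integer n ≥ N: l_S(Aⁿ B) ≤ 30δ. -/

import Mathlib

open Metric Filter Set Topology

/-- The Gromov product `(x|y)_z = ½(d(z,x)+d(z,y)−d(x,y))`. -/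
noncomputable def gromovProd {X : Type*} [MetricSpace X] (x y z : X) : ℝ :=
  (dist z x + dist z y - dist x y) / 2

/-- A parametrized geodesic segment from `x` to `y` (defined on `[0, dist x y]`). -/
def IsGeodesicSegment {X : Type*} [MetricSpace X] (x y : X) (f : ℝ → X) : Prop :=
  f 0 = x ∧ f (dist x y) = y ∧
    ∀ s ∈ Set.Icc (0 : ℝ) (dist x y), ∀ t ∈ Set.Icc (0 : ℝ) (dist x y),
      dist (f s) (f t) = |s - t|

/-- The metric space `X` is geodesic: any two points are joined by a geodesic segment. -/
def GeodesicMetricSpace (X : Type*) [MetricSpace X] : Prop :=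
  ∀ x y : X, ∃ f : ℝ → X, IsGeodesicSegment x y f

/-- `X` is δ-hyperbolic in the sense of Rips: every geodesic triangle is δ-thin,
i.e. each side is contained in the δ-neighbourhood of the union of the other two. -/
def RipsHyperbolic (X : Type*) [MetricSpace X] (δ : ℝ) : Prop :=
  ∀ (x y z : X) (f g h : ℝ → X),
    IsGeodesicSegment x y f → IsGeodesicSegment y z g → IsGeodesicSegment z x h →
      ∀ s ∈ Set.Icc (0 : ℝ) (dist x y),
        infDist (f s) (g '' Set.Icc 0 (dist y z) ∪ h '' Set.Icc 0 (dist z x)) ≤ δ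

/-- A (parametrized) geodesic line in `X`. -/
def IsGeodesicLine {X : Type*} [MetricSpace X] (L : ℝ → X) : Prop :=
  ∀ s t : ℝ, dist (L s) (L t) = |s - t|

/-- A (parametrized) geodesic ray in `X` (parametrized on `[0,∞)`). -/
def IsGeodesicRay {X : Type*} [MetricSpace X] (r : ℝ → X) : Prop :=
  ∀ s t : ℝ, 0 ≤ s → 0 ≤ t → dist (r s) (r t) = |s - t|

/-- `L` is a geodesic from `A⁻` to `A⁺` (oriented toward `A⁺`): it is a geodesic line
such that, with `x₀ = L 0`, the Gromov products `(Aⁿx₀ | L t)_{x₀}` tend to `+∞` as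
`min(n,t) → +∞`, and `(A⁻ⁿx₀ | L (−t))_{x₀}` tend to `+∞` as `min(n,t) → +∞`. -/
def IsGeodesicFromTo {X : Type*} [MetricSpace X] (A : X ≃ᵢ X) (L : ℝ → X) : Prop :=
  IsGeodesicLine L ∧
    (∀ M : ℝ, ∃ N : ℝ, ∀ (n : ℕ) (t : ℝ), N ≤ (n : ℝ) → N ≤ t →
      M ≤ gromovProd ((A ^ n) (L 0)) (L t) (L 0)) ∧
    (∀ M : ℝ, ∃ N : ℝ, ∀ (n : ℕ) (t : ℝ), N ≤ (n : ℝ) → N ≤ t →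
      M ≤ gromovProd ((A⁻¹ ^ n) (L 0)) (L (-t)) (L 0))

/-- An element of `F₂` is primitive if it is the image of a generator under an
automorphism of `F₂` (equivalently, it belongs to some free basis). -/
def Primitive (γ : FreeGroup (Fin 2)) : Prop :=
  ∃ φ : FreeGroup (Fin 2) ≃* FreeGroup (Fin 2), φ (FreeGroup.of 0) = γ

/-- The (reduced) word length of an element of `F₂`. -/
noncomputable def wordLength (γ : FreeGroup (Fin 2)) : ℕ := γ.toWord.length

/-- The cyclically reduced word length `‖γ‖`: the minimum of the word lengths
of the conjugates of `γ`. -/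
noncomputable def cycLength (γ : FreeGroup (Fin 2)) : ℕ :=
  sInf (Set.range fun g : FreeGroup (Fin 2) => wordLength (g * γ * g⁻¹))

/-- `γ` is cyclically reduced if its word length equals its cyclically reduced length. -/
def CyclicallyReduced (γ : FreeGroup (Fin 2)) : Prop :=
  wordLength γ = cycLength γ

section Basic
variable {X : Type*} [MetricSpace X]

lemma gp_nonneg (x y z : X) : 0 ≤ gromovProd x y z := by
  have := dist_triangle x z y
  unfold gromovProd
  rw [dist_comm z x] at *
  linarith

lemma gp_comm (x y z : X) : gromovProd x y z = gromovProd y x z := by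
  unfold gromovProd; rw [dist_comm x y]; ring

lemma gp_le_left (x y z : X) : gromovProd x y z ≤ dist z x := by
  have h : dist z y ≤ dist z x + dist x y := dist_triangle z x y
  unfold gromovProd
  linarith

lemma gp_base_change (x y z w : X) : gromovProd x y w - dist z w ≤ gromovProd x y z := by
  have h1 := dist_triangle w x z
  have h2 : dist w x ≤ dist w z + dist z x := dist_triangle w z x
  have h3 : dist w y ≤ dist w z + dist z y := dist_triangle w z y
  unfold gromovProd
  rw [dist_comm w z] at h2 h3
  linarith

lemma gp_move_left (x x' y z : X) : gromovProd x y z - dist x x' ≤ gromovProd x' y z := by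
  have h1 : dist z x ≤ dist z x' + dist x' x := dist_triangle z x' x
  have h2 : dist x' y ≤ dist x' x + dist x y := dist_triangle x' x y
  have h2' : dist x' y ≤ dist x' x + dist x y := h2
  unfold gromovProd
  rw [dist_comm x' x] at h1
  rw [dist_comm x x'] at *
  linarith

lemma gp_move_right (x y y' z : X) : gromovProd x y z - dist y y' ≤ gromovProd x y' z := by
  rw [gp_comm x y z, gp_comm x y' z]; exact gp_move_left y y' x z

lemma gp_isom (e : X ≃ᵢ X) (x y z : X) : gromovProd (e x) (e y) (e z) = gromovProd x y z := by
  unfold gromovProd; rw [e.dist_eq, e.dist_eq, e.dist_eq]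

/-- distances from endpoints to a point of a geodesic segment -/
lemma seg_dist_left {x y : X} {f : ℝ → X} (hf : IsGeodesicSegment x y f)
    {s : ℝ} (hs : s ∈ Set.Icc (0:ℝ) (dist x y)) : dist x (f s) = s := by
  have h0 : (0:ℝ) ∈ Set.Icc (0:ℝ) (dist x y) := ⟨le_refl _, dist_nonneg⟩
  have := hf.2.2 0 h0 s hs
  rw [hf.1] at this
  rw [this, abs_of_nonpos (by linarith [hs.1] : (0:ℝ) - s ≤ 0)]
  ring

lemma seg_dist_right {x y : X} {f : ℝ → X} (hf : IsGeodesicSegment x y f)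
    {s : ℝ} (hs : s ∈ Set.Icc (0:ℝ) (dist x y)) : dist (f s) y = dist x y - s := by
  have hd : dist x y ∈ Set.Icc (0:ℝ) (dist x y) := ⟨dist_nonneg, le_refl _⟩
  have := hf.2.2 s hs (dist x y) hd
  rw [hf.2.1] at this
  rw [this, abs_of_nonpos (by linarith [hs.2] : s - dist x y ≤ 0)]
  ring

/-- Gromov product is at most distance to any point on a geodesic between x and y -/
lemma gp_le_seg {x y : X} {f : ℝ → X} (hf : IsGeodesicSegment x y f) (w : X)
    {q : X} (hq : q ∈ f '' Set.Icc (0:ℝ) (dist x y)) : gromovProd x y w ≤ dist w q := by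
  obtain ⟨s, hs, rfl⟩ := hq
  have h1 := seg_dist_left hf hs
  have h2 := seg_dist_right hf hs
  have h3 : dist w x ≤ dist w (f s) + dist (f s) x := dist_triangle _ _ _
  have h4 : dist w y ≤ dist w (f s) + dist (f s) y := dist_triangle _ _ _
  unfold gromovProd
  rw [dist_comm (f s) x] at h3
  linarith

lemma seg_continuousOn {x y : X} {f : ℝ → X} (hf : IsGeodesicSegment x y f) :
    ContinuousOn f (Set.Icc (0:ℝ) (dist x y)) := by
  rw [Metric.continuousOn_iff]
  intro b hb ε hε
  exact ⟨ε, hε, fun a ha hab => by rwa [hf.2.2 a ha b hb, ← Real.dist_eq]⟩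

/-- Extraction from the Rips condition : a genuine point at distance ≤ δ. -/
lemma thin_extract {δ : ℝ} (hhyp : RipsHyperbolic X δ)
    {x y z : X} {f g h : ℝ → X}
    (hf : IsGeodesicSegment x y f) (hg : IsGeodesicSegment y z g) (hh : IsGeodesicSegment z x h)
    {s : ℝ} (hs : s ∈ Set.Icc (0:ℝ) (dist x y)) :
    ∃ q, (q ∈ g '' Set.Icc (0:ℝ) (dist y z) ∨ q ∈ h '' Set.Icc (0:ℝ) (dist z x)) ∧
      dist (f s) q ≤ δ := by
  have hK : IsCompact ((g '' Set.Icc 0 (dist y z)) ∪ (h '' Set.Icc 0 (dist z x))) :=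
    ((isCompact_Icc.image_of_continuousOn (seg_continuousOn hg))).union
      ((isCompact_Icc.image_of_continuousOn (seg_continuousOn hh)))
  have hne : ((g '' Set.Icc 0 (dist y z)) ∪ (h '' Set.Icc 0 (dist z x))).Nonempty := by
    refine ⟨g 0, Or.inl ⟨0, ⟨le_refl _, dist_nonneg⟩, rfl⟩⟩
  obtain ⟨q, hq, heq⟩ := hK.exists_infDist_eq_dist hne (f s)
  exact ⟨q, by simpa using hq, by rw [← heq]; exact hhyp x y z f g h hf hg hh s hs⟩

end Basic

section Hyp
variable {X : Type*} [MetricSpace X] {δ : ℝ}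

/-- Bridge: some point on a geodesic from x to z is (gromovProd + 2δ)-close to w. -/
lemma gp_near_seg (hgeo : GeodesicMetricSpace X) (hhyp : RipsHyperbolic X δ)
    (x z w : X) {f : ℝ → X} (hf : IsGeodesicSegment x z f) :
    ∃ q ∈ f '' Set.Icc (0:ℝ) (dist x z), dist w q ≤ gromovProd x z w + 2*δ := by
  set s₀ := gromovProd z w x with hs₀
  have hs : s₀ ∈ Set.Icc (0:ℝ) (dist x z) := ⟨gp_nonneg _ _ _, gp_le_left z w x⟩
  obtain ⟨g, hg⟩ := hgeo z w
  obtain ⟨h, hh⟩ := hgeo w x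
  obtain ⟨q, hq, hdq⟩ := thin_extract hhyp hf hg hh hs
  refine ⟨f s₀, ⟨s₀, hs, rfl⟩, ?_⟩
  have hfl := seg_dist_left hf hs
  have hfr := seg_dist_right hf hs
  rcases hq with hq | hq
  · obtain ⟨r, hr, rfl⟩ := hq
    have h1 := seg_dist_left hg hr
    have h2 := seg_dist_right hg hr
    have h3 : dist z (f s₀) ≤ dist z (g r) + dist (g r) (f s₀) := dist_triangle _ _ _
    have h4 : dist w (f s₀) ≤ dist w (g r) + dist (g r) (f s₀) := dist_triangle _ _ _
    rw [dist_comm (g r) (f s₀)] at h3 h4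
    have h5 : dist z (f s₀) = dist x z - s₀ := by rw [← hfr, dist_comm]
    have h6 : dist w (g r) = dist z w - r := by rw [← h2, dist_comm]
    unfold gromovProd at *
    have e1 : dist w x = dist x w := dist_comm w x
    have e2 : dist w z = dist z w := dist_comm w z
    have e3 : dist x z = dist z x := dist_comm x z
    linarith [hdq]
  · obtain ⟨r, hr, rfl⟩ := hq
    have h1 := seg_dist_left hh hr
    have h2 := seg_dist_right hh hr
    have h3 : dist x (f s₀) ≤ dist x (h r) + dist (h r) (f s₀) := dist_triangle _ _ _
    have h4 : dist w (f s₀) ≤ dist w (h r) + dist (h r) (f s₀) := dist_triangle _ _ _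
    rw [dist_comm (h r) (f s₀)] at h3 h4
    have h5 : dist x (h r) = dist w x - r := by rw [← h2, dist_comm]
    unfold gromovProd at *
    have e1 : dist w x = dist x w := dist_comm w x
    have e2 : dist w z = dist z w := dist_comm w z
    linarith [hdq]

/-- The four-point inequality with constant 3δ. -/
lemma gp_four (hgeo : GeodesicMetricSpace X) (hhyp : RipsHyperbolic X δ)
    (x y z w : X) :
    min (gromovProd x y w) (gromovProd y z w) - 3*δ ≤ gromovProd x z w := by
  obtain ⟨f, hf⟩ := hgeo x z
  obtain ⟨q, hq, hdq⟩ := gp_near_seg hgeo hhyp x z w hf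
  obtain ⟨s, hs, rfl⟩ := hq
  obtain ⟨g', hg'⟩ := hgeo z y
  obtain ⟨h', hh'⟩ := hgeo y x
  obtain ⟨q', hq', hdq'⟩ := thin_extract hhyp hf hg' hh' hs
  have hwq' : dist w q' ≤ gromovProd x z w + 3*δ := by
    calc dist w q' ≤ dist w (f s) + dist (f s) q' := dist_triangle _ _ _
    _ ≤ (gromovProd x z w + 2*δ) + δ := add_le_add hdq hdq'
    _ = gromovProd x z w + 3*δ := by ring
  rcases hq' with hmem | hmem
  · have := gp_le_seg hg' w hmem
    have : gromovProd y z w ≤ dist w q' := by rwa [gp_comm] at this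
    have hmin : min (gromovProd x y w) (gromovProd y z w) ≤ gromovProd y z w := min_le_right _ _
    linarith
  · have := gp_le_seg hh' w hmem
    have : gromovProd x y w ≤ dist w q' := by rwa [gp_comm] at this
    have hmin : min (gromovProd x y w) (gromovProd y z w) ≤ gromovProd x y w := min_le_left _ _
    linarith

end Hyp

section Line
variable {X : Type*} [MetricSpace X] {L : ℝ → X}

lemma line_comp_isom (hline : IsGeodesicLine L) (e : X ≃ᵢ X) :
    IsGeodesicLine (fun t => e (L t)) := fun s t => by
  rw [e.dist_eq]; exact hline s t

lemma line_seg (hline : IsGeodesicLine L) {a b : ℝ} (hab : a ≤ b) :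
    IsGeodesicSegment (L a) (L b) (fun t => L (a + t)) := by
  have hd : dist (L a) (L b) = b - a := by
    rw [hline a b, abs_of_nonpos (by linarith : a - b ≤ 0)]; ring
  refine ⟨by simp, by rw [hd]; congr 1; ring, ?_⟩
  intro s hs t ht
  rw [hline]
  congr 1; ring

lemma line_dist (hline : IsGeodesicLine L) (a b : ℝ) : dist (L a) (L b) = |a - b| :=
  hline a b

lemma gp_line (hline : IsGeodesicLine L) (a b : ℝ) :
    gromovProd (L a) (L b) (L 0) = (|a| + |b| - |a - b|) / 2 := by
  unfold gromovProd
  rw [hline 0 a, hline 0 b, hline a b]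
  rw [abs_sub_comm (0:ℝ) a, abs_sub_comm (0:ℝ) b]
  simp

lemma gp_line_mixed (hline : IsGeodesicLine L) {a b : ℝ} (ha : a ≤ 0) (hb : 0 ≤ b) :
    gromovProd (L a) (L b) (L 0) = 0 := by
  rw [gp_line hline, abs_of_nonpos ha, abs_of_nonneg hb,
    abs_of_nonpos (by linarith : a - b ≤ 0)]
  ring

lemma gp_line_pos (hline : IsGeodesicLine L) {a b : ℝ} (ha : 0 ≤ a) (hb : 0 ≤ b) :
    gromovProd (L a) (L b) (L 0) = min a b := by
  rw [gp_line hline, abs_of_nonneg ha, abs_of_nonneg hb]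
  rcases le_total a b with h | h
  · rw [abs_of_nonpos (by linarith : a - b ≤ 0), min_eq_left h]; ring
  · rw [abs_of_nonneg (by linarith : 0 ≤ a - b), min_eq_right h]; ring

lemma seg_reverse {x y : X} {f : ℝ → X} (hf : IsGeodesicSegment x y f) :
    IsGeodesicSegment y x (fun t => f (dist x y - t)) := by
  have hc : dist y x = dist x y := dist_comm y x
  refine ⟨by simp [hf.2.1], by rw [hc]; simp [hf.1], ?_⟩
  intro s hs t ht
  rw [hc] at hs ht
  have h1 : dist x y - s ∈ Set.Icc (0:ℝ) (dist x y) := ⟨by linarith [hs.2], by linarith [hs.1]⟩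
  have h2 : dist x y - t ∈ Set.Icc (0:ℝ) (dist x y) := ⟨by linarith [ht.2], by linarith [ht.1]⟩
  rw [hf.2.2 _ h1 _ h2]
  rw [show dist x y - s - (dist x y - t) = t - s by ring, abs_sub_comm]

end Line

section Soft
variable {X : Type*} [MetricSpace X] {δ : ℝ}
variable {A B : X ≃ᵢ X} {L : ℝ → X}

lemma isom_group_apply (e f : X ≃ᵢ X) (x : X) : (e * f) x = e (f x) := rfl

/-- gp with isometry applied to the two arguments, computed at moved basepoint. -/
lemma gp_isom_base (e : X ≃ᵢ X) (x y : X) (w : X) :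
    gromovProd x y w - dist w (e w) ≤ gromovProd (e x) (e y) w := by
  have h := gp_base_change (e x) (e y) w (e w)
  rw [gp_isom e x y w] at h
  exact h

/-- S1 : `A^m L S` and `L T` have large Gromov product at `L 0`. -/
lemma softS1 (hgeo : GeodesicMetricSpace X) (hhyp : RipsHyperbolic X δ)
    (hL : IsGeodesicFromTo A L) (m : ℕ) (M : ℝ) :
    ∃ R : ℝ, ∀ S T : ℝ, R ≤ S → R ≤ T →
      M ≤ gromovProd ((A ^ m) (L S)) (L T) (L 0) := by
  set τm := dist (L 0) ((A ^ m) (L 0)) with hτm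
  obtain ⟨N₁, hN₁⟩ := hL.2.1 (M + 3*δ + τm)
  obtain ⟨k₀, hk₀⟩ := exists_nat_ge N₁
  refine ⟨N₁, fun S T hS hT => ?_⟩
  have e1 : ((A : X ≃ᵢ X) ^ (m + k₀)) (L 0) = (A ^ m) ((A ^ k₀) (L 0)) := by
    rw [pow_add]; rfl
  -- term 1
  have t1 : M + 3*δ ≤ gromovProd ((A ^ m) (L S)) ((A ^ (m + k₀)) (L 0)) (L 0) := by
    have h0 : M + 3*δ + τm ≤ gromovProd ((A ^ k₀) (L 0)) (L S) (L 0) := hN₁ k₀ S hk₀ hS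
    rw [gp_comm] at h0
    have h1 := gp_isom_base (A ^ m) (L S) ((A ^ k₀) (L 0)) (L 0)
    rw [← e1] at h1
    linarith
  -- term 2
  have t2 : M + 3*δ ≤ gromovProd ((A ^ (m + k₀)) (L 0)) (L T) (L 0) := by
    have : M + 3*δ + τm ≤ gromovProd ((A ^ (m + k₀)) (L 0)) (L T) (L 0) := by
      refine hN₁ (m + k₀) T ?_ hT
      calc N₁ ≤ (k₀ : ℝ) := hk₀
      _ ≤ ((m + k₀ : ℕ) : ℝ) := by push_cast; linarith [Nat.cast_nonneg (α := ℝ) m]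
    have hτnn : 0 ≤ τm := dist_nonneg
    linarith
  have h4 := gp_four hgeo hhyp ((A ^ m) (L S)) ((A ^ (m + k₀)) (L 0)) (L T) (L 0)
  have hmin : M + 3*δ ≤ min (gromovProd ((A ^ m) (L S)) ((A ^ (m + k₀)) (L 0)) (L 0))
      (gromovProd ((A ^ (m + k₀)) (L 0)) (L T) (L 0)) := le_min t1 t2
  linarith

/-- S2 : negative side version. -/
lemma softS2 (hgeo : GeodesicMetricSpace X) (hhyp : RipsHyperbolic X δ)
    (hL : IsGeodesicFromTo A L) (m : ℕ) (M : ℝ) :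
    ∃ R : ℝ, ∀ S T : ℝ, R ≤ S → R ≤ T →
      M ≤ gromovProd ((A ^ m) (L (-S))) (L (-T)) (L 0) := by
  set τm := dist (L 0) ((A ^ m) (L 0)) with hτm
  obtain ⟨N₁, hN₁⟩ := hL.2.2 (M + 3*δ + τm)
  obtain ⟨k₀, hk₀⟩ := exists_nat_ge N₁
  refine ⟨N₁, fun S T hS hT => ?_⟩
  have egrp : (A ^ m) * ((A⁻¹) ^ (m + k₀)) = (A⁻¹ : X ≃ᵢ X) ^ k₀ := by
    rw [inv_pow, inv_pow, pow_add]
    group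
  have e1 : (A ^ m) (((A⁻¹ : X ≃ᵢ X) ^ (m + k₀)) (L 0)) = ((A⁻¹ : X ≃ᵢ X) ^ k₀) (L 0) := by
    rw [← isom_group_apply, egrp]
  -- term 1
  have t1 : M + 3*δ ≤ gromovProd ((A ^ m) (L (-S))) (((A⁻¹ : X ≃ᵢ X) ^ k₀) (L 0)) (L 0) := by
    have h0 : M + 3*δ + τm ≤ gromovProd (((A⁻¹ : X ≃ᵢ X) ^ (m + k₀)) (L 0)) (L (-S)) (L 0) := by
      refine hN₁ (m + k₀) S ?_ hS
      calc N₁ ≤ (k₀ : ℝ) := hk₀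
      _ ≤ ((m + k₀ : ℕ) : ℝ) := by push_cast; linarith [Nat.cast_nonneg (α := ℝ) m]
    rw [gp_comm] at h0
    have h1 := gp_isom_base (A ^ m) (L (-S)) (((A⁻¹ : X ≃ᵢ X) ^ (m + k₀)) (L 0)) (L 0)
    rw [e1] at h1
    linarith
  -- term 2
  have t2 : M + 3*δ ≤ gromovProd (((A⁻¹ : X ≃ᵢ X) ^ k₀) (L 0)) (L (-T)) (L 0) := by
    have := hN₁ k₀ T hk₀ hT
    have hτnn : 0 ≤ τm := dist_nonneg
    linarith
  have h4 := gp_four hgeo hhyp ((A ^ m) (L (-S))) (((A⁻¹ : X ≃ᵢ X) ^ k₀) (L 0)) (L (-T)) (L 0)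
  have hmin := le_min t1 t2
  linarith

/-- S3 : `B (L S)` and `L (-T)` have large Gromov product at `L 0`. -/
lemma softS3 (hδ : 0 ≤ δ) (hgeo : GeodesicMetricSpace X) (hhyp : RipsHyperbolic X δ)
    (hL : IsGeodesicFromTo A L)
    (hBA : ∀ K : ℝ, ∃ N : ℝ, ∀ n m : ℕ, N ≤ (n : ℝ) → N ≤ (m : ℝ) →
      K ≤ gromovProd (B ((A ^ n) (L 0))) ((A⁻¹ ^ m) (L 0)) (L 0))
    (M : ℝ) :
    ∃ R : ℝ, ∀ S T : ℝ, R ≤ S → R ≤ T →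
      M ≤ gromovProd (B (L S)) (L (-T)) (L 0) := by
  set D := dist (L 0) (B (L 0)) with hD
  have hDnn : 0 ≤ D := dist_nonneg
  obtain ⟨N₂, hN₂⟩ := hL.2.2 (M + 6*δ)
  obtain ⟨N₃, hN₃⟩ := hBA (M + 6*δ)
  obtain ⟨N₁, hN₁⟩ := hL.2.1 (M + 6*δ + D)
  obtain ⟨j₀, hj₀⟩ := exists_nat_ge (max N₂ N₃)
  obtain ⟨k₀, hk₀⟩ := exists_nat_ge (max N₁ N₃)
  refine ⟨max N₁ N₂, fun S T hS hT => ?_⟩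
  have hj₀2 : N₂ ≤ (j₀ : ℝ) := le_trans (le_max_left _ _) hj₀
  have hj₀3 : N₃ ≤ (j₀ : ℝ) := le_trans (le_max_right _ _) hj₀
  have hk₀1 : N₁ ≤ (k₀ : ℝ) := le_trans (le_max_left _ _) hk₀
  have hk₀3 : N₃ ≤ (k₀ : ℝ) := le_trans (le_max_right _ _) hk₀
  -- t2 : gp (B (A^k₀ L0)) (L (-T)) (L0) ≥ M + 3δ
  have t2 : M + 3*δ ≤ gromovProd (B ((A ^ k₀) (L 0))) (L (-T)) (L 0) := by
    have h1 : M + 6*δ ≤ gromovProd (B ((A ^ k₀) (L 0))) ((A⁻¹ ^ j₀) (L 0)) (L 0) :=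
      hN₃ k₀ j₀ hk₀3 hj₀3
    have h2 : M + 6*δ ≤ gromovProd ((A⁻¹ ^ j₀) (L 0)) (L (-T)) (L 0) :=
      hN₂ j₀ T hj₀2 (le_trans (le_max_right _ _) hT)
    have h4 := gp_four hgeo hhyp (B ((A ^ k₀) (L 0))) ((A⁻¹ ^ j₀) (L 0)) (L (-T)) (L 0)
    have hmin := le_min h1 h2
    linarith
  -- t1 : gp (B (L S)) (B (A^k₀ L0)) (L0) ≥ M + 3δ
  have t1 : M + 3*δ ≤ gromovProd (B (L S)) (B ((A ^ k₀) (L 0))) (L 0) := by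
    have h0 : M + 6*δ + D ≤ gromovProd ((A ^ k₀) (L 0)) (L S) (L 0) :=
      hN₁ k₀ S hk₀1 (le_trans (le_max_left _ _) hS)
    rw [gp_comm] at h0
    have h1 := gp_isom_base B (L S) ((A ^ k₀) (L 0)) (L 0)
    rw [← hD] at h1
    linarith
  have h4 := gp_four hgeo hhyp (B (L S)) (B ((A ^ k₀) (L 0))) (L (-T)) (L 0)
  have hmin := le_min t1 t2
  linarith

end Soft

section Travel
variable {X : Type*} [MetricSpace X] {δ : ℝ}
variable {A B : X ≃ᵢ X} {L : ℝ → X}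

/-- Every point of `A^m ∘ L` lies within `2δ` of the line `L`. -/
lemma travel (hδ : 0 ≤ δ) (hgeo : GeodesicMetricSpace X) (hhyp : RipsHyperbolic X δ)
    (hL : IsGeodesicFromTo A L) (m : ℕ) (u : ℝ) :
    ∃ p : ℝ, dist ((A ^ m) (L u)) (L p) ≤ 2*δ := by
  have hline := hL.1
  set z := (A ^ m) (L u) with hz
  set dz := dist (L 0) z with hdz
  obtain ⟨R₁, hR₁⟩ := softS1 hgeo hhyp hL m (δ + dz + 1)
  obtain ⟨R₂, hR₂⟩ := softS2 hgeo hhyp hL m (2*δ + dz + 1)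
  set T := max (max R₁ R₂) 0 with hT
  set S := max T |u| with hS
  have hTnn : 0 ≤ T := le_max_right _ _
  have hSu : |u| ≤ S := le_max_right _ _
  have hSnn : 0 ≤ S := le_trans (abs_nonneg u) hSu
  have hSR₁ : R₁ ≤ S := le_trans (le_trans (le_max_left _ _) (le_max_left _ _)) (le_max_left T _)
  have hSR₂ : R₂ ≤ S := le_trans (le_trans (le_max_right _ _) (le_max_left _ _)) (le_max_left T _)
  have hTR₁ : R₁ ≤ T := le_trans (le_max_left _ _) (le_max_left _ _)
  have hTR₂ : R₂ ≤ T := le_trans (le_max_right _ _) (le_max_left _ _)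
  -- the four corners
  set y₁ := (A ^ m) (L (-S)) with hy₁
  set y₂ := (A ^ m) (L S) with hy₂
  set x₂ := L T with hx₂
  set x₁ := L (-T) with hx₁
  -- side f from y₁ to y₂
  have hlineA : IsGeodesicLine (fun t => (A ^ m) (L t)) := line_comp_isom hline (A ^ m)
  have hd12 : dist y₁ y₂ = 2*S := by
    rw [hy₁, hy₂, (A^m).dist_eq, hline]
    rw [abs_of_nonpos (by linarith : -S - S ≤ 0)]; ring
  have hf : IsGeodesicSegment y₁ y₂ (fun t => (A ^ m) (L (-S + t))) := by
    have := line_seg hlineA (by linarith : -S ≤ S)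
    simpa [hd12] using this
  obtain ⟨g, hg⟩ := hgeo y₂ x₂
  obtain ⟨h, hh⟩ := hgeo x₂ y₁
  have hmem : S + u ∈ Set.Icc (0:ℝ) (dist y₁ y₂) := by
    rw [hd12]
    constructor
    · linarith [neg_abs_le u]
    · linarith [le_abs_self u]
  obtain ⟨q, hq, hdq⟩ := thin_extract hhyp hf hg hh hmem
  rw [show -S + (S + u) = u by ring] at hdq
  rw [← hz] at hdq
  rcases hq with hq | hq
  · -- q on [y₂, x₂] : excluded
    exfalso
    have h1 : gromovProd y₂ x₂ z ≤ dist z q := gp_le_seg hg z hq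
    have h2 : (δ + dz + 1) ≤ gromovProd y₂ x₂ (L 0) := hR₁ S T hSR₁ hTR₁
    have h3 := gp_base_change y₂ x₂ z (L 0)
    rw [dist_comm z (L 0), ← hdz] at h3
    linarith
  -- q = h r on [x₂, y₁]
  obtain ⟨r, hr, hqr⟩ := hq
  obtain ⟨g₂, hg₂⟩ := hgeo y₁ x₁
  have hh₂ : IsGeodesicSegment x₁ x₂ (fun t => L (-T + t)) :=
    line_seg hline (by linarith : -T ≤ T)
  obtain ⟨q₂, hq₂, hdq₂⟩ := thin_extract hhyp hh hg₂ hh₂ hr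
  rw [hqr] at hdq₂
  have hzq₂ : dist z q₂ ≤ 2*δ := by
    calc dist z q₂ ≤ dist z q + dist q q₂ := dist_triangle _ _ _
    _ ≤ δ + δ := add_le_add hdq hdq₂
    _ = 2*δ := by ring
  rcases hq₂ with hq₂ | hq₂
  · -- q₂ on [y₁, x₁] : excluded
    exfalso
    have h1 : gromovProd y₁ x₁ z ≤ dist z q₂ := gp_le_seg hg₂ z hq₂
    have h2 : (2*δ + dz + 1) ≤ gromovProd y₁ x₁ (L 0) := hR₂ S T hSR₂ hTR₂
    have h3 := gp_base_change y₁ x₁ z (L 0)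
    rw [dist_comm z (L 0), ← hdz] at h3
    linarith
  · obtain ⟨r₂, hr₂, hqr₂⟩ := hq₂
    refine ⟨-T + r₂, ?_⟩
    have : L (-T + r₂) = q₂ := hqr₂
    rw [this]; exact hzq₂

end Travel

section TravelB
variable {X : Type*} [MetricSpace X] {δ : ℝ}
variable {A B : X ≃ᵢ X} {L : ℝ → X}

/-- For `s ≥ d(B o, o)`, the point `B (L s)` is `2δ`-close to the negative ray of `L`. -/
lemma travelB (hδ : 0 ≤ δ) (hgeo : GeodesicMetricSpace X) (hhyp : RipsHyperbolic X δ)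
    (hL : IsGeodesicFromTo A L)
    (hBA : ∀ K : ℝ, ∃ N : ℝ, ∀ n m : ℕ, N ≤ (n : ℝ) → N ≤ (m : ℝ) →
      K ≤ gromovProd (B ((A ^ n) (L 0))) ((A⁻¹ ^ m) (L 0)) (L 0))
    (s : ℝ) (hs : dist (B (L 0)) (L 0) ≤ s) :
    ∃ ψ : ℝ, ψ ≤ 0 ∧ dist (B (L s)) (L ψ) ≤ 2*δ := by
  have hline := hL.1
  set D := dist (B (L 0)) (L 0) with hD
  have hDnn : 0 ≤ D := dist_nonneg
  have hsnn : 0 ≤ s := le_trans hDnn hs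
  set z := B (L s) with hz
  have hzL0 : dist z (L 0) ≤ D + s := by
    calc dist z (L 0) ≤ dist z (B (L 0)) + dist (B (L 0)) (L 0) := dist_triangle _ _ _
    _ = dist (L s) (L 0) + D := by rw [B.dist_eq]
    _ ≤ s + D := by rw [hline, abs_of_nonneg (by linarith : (0:ℝ) ≤ s - 0)]; linarith
    _ = D + s := by ring
  obtain ⟨R, hR⟩ := softS3 hδ hgeo hhyp hL hBA (2*δ + (D + s) + 1)
  set T := max R 0 with hT
  set S := max (max R s) 0 with hS
  have hTnn : 0 ≤ T := le_max_right _ _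
  have hSnn : 0 ≤ S := le_max_right _ _
  have hSs : s ≤ S := le_trans (le_max_right _ _) (le_max_left _ _)
  have hSR : R ≤ S := le_trans (le_max_left _ _) (le_max_left _ _)
  have hTR : R ≤ T := le_max_left _ _
  -- side from B (L 0) to B (L S)
  have hlineB : IsGeodesicLine (fun t => B (L t)) := line_comp_isom hline B
  have hf : IsGeodesicSegment (B (L 0)) (B (L S)) (fun t => B (L t)) := by
    have h0 := line_seg hlineB (hSnn : (0:ℝ) ≤ S)
    simpa using h0
  obtain ⟨g, hg⟩ := hgeo (B (L S)) (L 0)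
  obtain ⟨h, hh⟩ := hgeo (L 0) (B (L 0))
  have hdBB : dist (B (L 0)) (B (L S)) = S := by
    rw [B.dist_eq, hline, abs_of_nonpos (by linarith : (0:ℝ) - S ≤ 0)]; ring
  have hmem : s ∈ Set.Icc (0:ℝ) (dist (B (L 0)) (B (L S))) := by
    rw [hdBB]; exact ⟨hsnn, hSs⟩
  obtain ⟨q, hq, hdq⟩ := thin_extract hhyp hf hg hh hmem
  rw [← hz] at hdq
  rcases hq with hq | hq
  · -- q on [B L S, L 0] : continue with second triangle
    obtain ⟨r, hr, hqr⟩ := hq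
    have hf₂ := seg_reverse hg
    -- hf₂ : IsGeodesicSegment (L 0) (B (L S)) (fun t => g (dist (B (L S)) (L 0) - t))
    set d := dist (B (L S)) (L 0) with hd
    have hd' : dist (L 0) (B (L S)) = d := dist_comm _ _
    have hmem₂ : d - r ∈ Set.Icc (0:ℝ) (dist (L 0) (B (L S))) := by
      rw [hd']; exact ⟨by linarith [hr.2], by linarith [hr.1]⟩
    obtain ⟨g₂, hg₂⟩ := hgeo (B (L S)) (L (-T))
    have hh₂ : IsGeodesicSegment (L (-T)) (L 0) (fun t => L (-T + t)) := by
      have h0 := line_seg hline (by linarith : -T ≤ 0)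
      simpa using h0
    obtain ⟨q₂, hq₂, hdq₂⟩ := thin_extract hhyp hf₂ hg₂ hh₂ hmem₂
    rw [show d - (d - r) = r by ring, hqr] at hdq₂
    have hzq₂ : dist z q₂ ≤ 2*δ := by
      calc dist z q₂ ≤ dist z q + dist q q₂ := dist_triangle _ _ _
      _ ≤ δ + δ := add_le_add hdq hdq₂
      _ = 2*δ := by ring
    rcases hq₂ with hq₂ | hq₂
    · exfalso
      have h1 : gromovProd (B (L S)) (L (-T)) z ≤ dist z q₂ := gp_le_seg hg₂ z hq₂
      have h2 : (2*δ + (D + s) + 1) ≤ gromovProd (B (L S)) (L (-T)) (L 0) := hR S T hSR hTR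
      have h3 := gp_base_change (B (L S)) (L (-T)) z (L 0)
      linarith
    · obtain ⟨r₂, hr₂, hqr₂⟩ := hq₂
      refine ⟨-T + r₂, ?_, ?_⟩
      · have : dist (L (-T)) (L 0) = T := by
          rw [hline, abs_of_nonpos (by linarith : -T - 0 ≤ 0)]; ring
        rw [this] at hr₂
        linarith [hr₂.2]
      · have : L (-T + r₂) = q₂ := hqr₂
        rw [this]; exact hzq₂
  · -- q on [L 0, B (L 0)] : then z is already 2δ-close to L 0
    obtain ⟨r, hr, hqr⟩ := hq
    subst hqr
    have h1 := seg_dist_left hh hr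
    have h2 := seg_dist_right hh hr
    have hDc : dist (L 0) (B (L 0)) = D := by rw [hD, dist_comm]
    have hzB : dist z (B (L 0)) = s := by
      rw [hz, B.dist_eq, hline, abs_of_nonneg (by linarith : (0:ℝ) ≤ s - 0)]; ring
    have h3 : dist z (B (L 0)) ≤ dist z (h r) + dist (h r) (B (L 0)) := dist_triangle _ _ _
    have h4 : dist z (L 0) ≤ dist z (h r) + dist (h r) (L 0) := dist_triangle _ _ _
    refine ⟨0, le_refl _, ?_⟩
    rw [dist_comm (h r) (L 0), h1] at h4
    rw [hzB, h2, hDc] at h3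
    linarith
end TravelB

section Affine
variable {X : Type*} [MetricSpace X] {δ : ℝ}
variable {A : X ≃ᵢ X} {L : ℝ → X}

/-- `A^n` acts on `L` approximately as translation by `σ`. -/
lemma travel_affine (hδ : 0 ≤ δ) (hgeo : GeodesicMetricSpace X) (hhyp : RipsHyperbolic X δ)
    (hL : IsGeodesicFromTo A L) (n : ℕ) {σ : ℝ}
    (hσ : dist ((A ^ n) (L 0)) (L σ) ≤ 2*δ) (u : ℝ) :
    ∃ p : ℝ, dist ((A ^ n) (L u)) (L p) ≤ 2*δ ∧ |p - u - σ| ≤ 8*δ := by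
  have hline := hL.1
  set τ := dist (L 0) ((A ^ n) (L 0)) with hτ
  have hτnn : 0 ≤ τ := dist_nonneg
  have hdL0 : ∀ a : ℝ, dist (L 0) (L a) = |a| := by
    intro a; rw [hline, abs_sub_comm]; simp
  have hσle : σ ≤ τ + 2*δ := by
    have : |σ| ≤ τ + 2*δ := by
      rw [← hdL0 σ]
      calc dist (L 0) (L σ) ≤ dist (L 0) ((A ^ n) (L 0)) + dist ((A ^ n) (L 0)) (L σ) :=
        dist_triangle _ _ _
      _ ≤ τ + 2*δ := by rw [← hτ]; linarith
    linarith [le_abs_self σ]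
  obtain ⟨p, hp⟩ := travel hδ hgeo hhyp hL n u
  have hdzu : dist (L 0) ((A ^ n) (L u)) ≤ τ + |u| := by
    calc dist (L 0) ((A ^ n) (L u)) ≤ dist (L 0) ((A ^ n) (L 0)) +
        dist ((A ^ n) (L 0)) ((A ^ n) (L u)) := dist_triangle _ _ _
    _ = τ + dist (L 0) (L u) := by rw [← hτ, (A ^ n).dist_eq]
    _ = τ + |u| := by rw [hdL0]
  have hple : p ≤ τ + |u| + 2*δ := by
    have : |p| ≤ τ + |u| + 2*δ := by
      rw [← hdL0 p]
      calc dist (L 0) (L p) ≤ dist (L 0) ((A ^ n) (L u)) + dist ((A ^ n) (L u)) (L p) :=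
        dist_triangle _ _ _
      _ ≤ (τ + |u|) + 2*δ := add_le_add hdzu hp
    linarith [le_abs_self p]
  set W := τ + |u| + 2*δ + 1 with hW
  obtain ⟨R, hR⟩ := softS1 hgeo hhyp hL n (W + 2*δ)
  set U := max (max R u) 0 with hU
  set T := max R 0 with hT
  have hUu : u ≤ U := le_trans (le_max_right _ _) (le_max_left _ _)
  have hUR : R ≤ U := le_trans (le_max_left _ _) (le_max_left _ _)
  have hUnn : 0 ≤ U := le_max_right _ _
  have hTR : R ≤ T := le_max_left _ _
  have hTnn : 0 ≤ T := le_max_right _ _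
  obtain ⟨pU, hpU⟩ := travel hδ hgeo hhyp hL n U
  -- pU is large
  have hpU_large : W ≤ pU := by
    have h1 : W + 2*δ ≤ gromovProd ((A ^ n) (L U)) (L T) (L 0) := hR U T hUR hTR
    have h2 := gp_move_left ((A ^ n) (L U)) (L pU) (L T) (L 0)
    have h3 : W ≤ gromovProd (L pU) (L T) (L 0) := by linarith
    by_cases hc : pU ≤ 0
    · rw [gp_line_mixed hline hc hTnn] at h3
      have : 0 ≤ τ + |u| := by positivity
      simp only [hW] at h3
      linarith
    · push_neg at hc
      rw [gp_line_pos hline (le_of_lt hc) hTnn] at h3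
      rcases min_le_iff.mp (le_refl (min pU T)) with _ | _ <;>
        · rcases le_total pU T with hle | hle
          · rw [min_eq_left hle] at h3; exact h3
          · rw [min_eq_right hle] at h3; linarith
  -- distance estimates
  have hdUu : dist ((A ^ n) (L U)) ((A ^ n) (L u)) = U - u := by
    rw [(A ^ n).dist_eq, hline, abs_of_nonneg (by linarith : 0 ≤ U - u)]
  have hdU0 : dist ((A ^ n) (L U)) ((A ^ n) (L 0)) = U := by
    rw [(A ^ n).dist_eq, hline, abs_of_nonneg (by linarith : 0 ≤ U - 0)]
    norm_num
  have hpUp : |pU - p| ≤ (U - u) + 4*δ ∧ (U - u) - 4*δ ≤ |pU - p| := by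
    have he : dist (L pU) (L p) = |pU - p| := hline _ _
    constructor
    · rw [← he]
      calc dist (L pU) (L p) ≤ dist (L pU) ((A ^ n) (L U)) + dist ((A ^ n) (L U)) (L p) :=
          dist_triangle _ _ _
      _ ≤ 2*δ + (dist ((A ^ n) (L U)) ((A ^ n) (L u)) + dist ((A ^ n) (L u)) (L p)) := by
          rw [dist_comm (L pU)]
          exact add_le_add hpU (dist_triangle _ _ _)
      _ ≤ 2*δ + ((U - u) + 2*δ) := by rw [hdUu]; linarith
      _ = (U - u) + 4*δ := by ring
    · have : dist ((A ^ n) (L U)) ((A ^ n) (L u)) ≤ 2*δ + |pU - p| + 2*δ := by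
        calc dist ((A ^ n) (L U)) ((A ^ n) (L u)) ≤
            dist ((A ^ n) (L U)) (L pU) + dist (L pU) ((A ^ n) (L u)) := dist_triangle _ _ _
        _ ≤ 2*δ + (dist (L pU) (L p) + dist (L p) ((A ^ n) (L u))) :=
            add_le_add hpU (dist_triangle _ _ _)
        _ ≤ 2*δ + (|pU - p| + 2*δ) := by
            rw [he, dist_comm (L p)]
            linarith
        _ = 2*δ + |pU - p| + 2*δ := by ring
      rw [hdUu] at this; linarith
  have hpUσ : |pU - σ| ≤ U + 4*δ ∧ U - 4*δ ≤ |pU - σ| := by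
    have he : dist (L pU) (L σ) = |pU - σ| := hline _ _
    constructor
    · rw [← he]
      calc dist (L pU) (L σ) ≤ dist (L pU) ((A ^ n) (L U)) + dist ((A ^ n) (L U)) (L σ) :=
          dist_triangle _ _ _
      _ ≤ 2*δ + (dist ((A ^ n) (L U)) ((A ^ n) (L 0)) + dist ((A ^ n) (L 0)) (L σ)) := by
          rw [dist_comm (L pU)]
          exact add_le_add hpU (dist_triangle _ _ _)
      _ ≤ 2*δ + (U + 2*δ) := by rw [hdU0]; linarith
      _ = U + 4*δ := by ring
    · have : dist ((A ^ n) (L U)) ((A ^ n) (L 0)) ≤ 2*δ + |pU - σ| + 2*δ := by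
        calc dist ((A ^ n) (L U)) ((A ^ n) (L 0)) ≤
            dist ((A ^ n) (L U)) (L pU) + dist (L pU) ((A ^ n) (L 0)) := dist_triangle _ _ _
        _ ≤ 2*δ + (dist (L pU) (L σ) + dist (L σ) ((A ^ n) (L 0))) :=
            add_le_add hpU (dist_triangle _ _ _)
        _ ≤ 2*δ + (|pU - σ| + 2*δ) := by
            rw [he, dist_comm (L σ)]
            linarith
        _ = 2*δ + |pU - σ| + 2*δ := by ring
      rw [hdU0] at this; linarith
  -- signs : pU ≥ p and pU ≥ σ
  have hsign1 : pU - p = |pU - p| := by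
    rw [abs_of_nonneg (by simp only [hW] at hpU_large; linarith : 0 ≤ pU - p)]
  have hsign2 : pU - σ = |pU - σ| := by
    have : σ < pU := by
      have h1 : 0 ≤ |u| := abs_nonneg u
      simp only [hW] at hpU_large
      linarith
    rw [abs_of_nonneg (by linarith : 0 ≤ pU - σ)]
  refine ⟨p, hp, ?_⟩
  rw [abs_le]
  constructor
  · nlinarith [hpUp.1, hpUσ.2, hsign1, hsign2]
  · nlinarith [hpUp.2, hpUσ.1, hsign1, hsign2]

end Affine

section Orient
variable {X : Type*} [MetricSpace X] {δ : ℝ}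
variable {A : X ≃ᵢ X} {L : ℝ → X}

/-- Orientation: the near-position `σ` of `A^n (L 0)` on `L` is positive (≈ `+τ`). -/
lemma sigma_pos (hδ : 0 ≤ δ) (hgeo : GeodesicMetricSpace X) (hhyp : RipsHyperbolic X δ)
    (hL : IsGeodesicFromTo A L) (n : ℕ) {σ : ℝ}
    (hσ : dist ((A ^ n) (L 0)) (L σ) ≤ 2*δ)
    (h18 : 18*δ ≤ dist (L 0) ((A ^ n) (L 0))) :
    dist (L 0) ((A ^ n) (L 0)) - 2*δ ≤ σ := by
  have hline := hL.1
  set τ := dist (L 0) ((A ^ n) (L 0)) with hτ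
  have hτnn : 0 ≤ τ := dist_nonneg
  have hdL0 : ∀ a : ℝ, dist (L 0) (L a) = |a| := by
    intro a; rw [hline, abs_sub_comm]; simp
  have habs_ge : τ - 2*δ ≤ |σ| := by
    have : τ ≤ |σ| + 2*δ := by
      calc τ = dist (L 0) ((A ^ n) (L 0)) := hτ
      _ ≤ dist (L 0) (L σ) + dist (L σ) ((A ^ n) (L 0)) := dist_triangle _ _ _
      _ ≤ |σ| + 2*δ := by rw [hdL0, dist_comm (L σ)]; linarith
    linarith
  have habs_le : |σ| ≤ τ + 2*δ := by
    rw [← hdL0 σ]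
    calc dist (L 0) (L σ) ≤ dist (L 0) ((A ^ n) (L 0)) + dist ((A ^ n) (L 0)) (L σ) :=
      dist_triangle _ _ _
    _ ≤ τ + 2*δ := by rw [← hτ]; linarith
  by_contra hcon
  push_neg at hcon
  -- so σ < τ - 2δ
  rcases le_or_gt τ (16*δ) with hsmall | hbig
  · -- then δ ≤ 0 hence δ = 0 and τ = 0 and σ = 0
    have hδ0 : δ = 0 := by linarith
    have hτ0 : τ = 0 := by rw [hδ0] at hsmall; linarith
    have : |σ| = 0 := le_antisymm (by rw [hτ0, hδ0] at habs_le; linarith) (abs_nonneg σ)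
    have hσ0 : σ = 0 := abs_eq_zero.mp this
    rw [hσ0, hτ0, hδ0] at hcon
    linarith
  · -- main case : τ > 16δ
    have hσneg : σ ≤ -(τ - 2*δ) := by
      rcases le_or_gt 0 σ with h0 | h0
      · rw [abs_of_nonneg h0] at habs_ge; linarith
      · rw [abs_of_neg h0] at habs_ge; linarith
    have hn1 : 1 ≤ n := by
      by_contra hn
      push_neg at hn
      interval_cases n
      · simp only [pow_zero] at hτ
        have : τ = 0 := by rw [hτ]; simp
        linarith
    -- positions of the powers
    have H : ∀ k : ℕ, ∃ p, dist ((A ^ (k*n)) (L 0)) (L p) ≤ 2*δ :=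
      fun k => travel hδ hgeo hhyp hL (k*n) 0
    choose p hp using H
    have hp0 : |p 0| ≤ 2*δ := by
      have := hp 0
      simp only [Nat.zero_mul, pow_zero] at this
      rw [← hdL0 (p 0)]
      exact this
    have hrec : ∀ k : ℕ, p (k+1) ≤ p k + σ + 14*δ := by
      intro k
      obtain ⟨q, hq1, hq2⟩ := travel_affine hδ hgeo hhyp hL n hσ (p k)
      have he : ((A : X ≃ᵢ X) ^ ((k+1)*n)) (L 0) = (A ^ n) ((A ^ (k*n)) (L 0)) := by
        rw [show (k+1)*n = n + k*n by ring, pow_add]; rfl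
      have h1 : dist ((A ^ ((k+1)*n)) (L 0)) ((A ^ n) (L (p k))) ≤ 2*δ := by
        rw [he, (A ^ n).dist_eq]
        exact hp k
      have h2 : dist ((A ^ ((k+1)*n)) (L 0)) (L q) ≤ 4*δ := by
        calc dist ((A ^ ((k+1)*n)) (L 0)) (L q) ≤
            dist ((A ^ ((k+1)*n)) (L 0)) ((A ^ n) (L (p k))) + dist ((A ^ n) (L (p k))) (L q) :=
            dist_triangle _ _ _
        _ ≤ 2*δ + 2*δ := add_le_add h1 hq1
        _ = 4*δ := by ring
      have h3 : |p (k+1) - q| ≤ 6*δ := by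
        rw [← hline]
        calc dist (L (p (k+1))) (L q) ≤
            dist (L (p (k+1))) ((A ^ ((k+1)*n)) (L 0)) + dist ((A ^ ((k+1)*n)) (L 0)) (L q) :=
            dist_triangle _ _ _
        _ ≤ 2*δ + 4*δ := add_le_add (by rw [dist_comm]; exact hp (k+1)) h2
        _ = 6*δ := by ring
      have h4 : p (k+1) ≤ q + 6*δ := by
        have := le_abs_self (p (k+1) - q)
        linarith
      have h5 : q ≤ p k + σ + 8*δ := by
        have := le_abs_self (q - p k - σ)
        linarith
      linarith
    have hlin : ∀ k : ℕ, p k ≤ p 0 + k*(σ + 14*δ) := by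
      intro k
      induction k with
      | zero => simp
      | succ k ih =>
        have := hrec k
        push_cast
        push_cast at ih
        linarith
    -- get contradiction with hL positive clause
    obtain ⟨N₁, hN₁⟩ := hL.2.1 (2*δ + 1)
    have hdrift : 0 < τ - 16*δ := by linarith
    obtain ⟨k₀, hk₀⟩ := exists_nat_ge (max N₁ ((2*δ)/(τ - 16*δ)))
    have hk₀N : N₁ ≤ (k₀ : ℝ) := le_trans (le_max_left _ _) hk₀
    have hk₀d : (2*δ)/(τ - 16*δ) ≤ (k₀ : ℝ) := le_trans (le_max_right _ _) hk₀
    have hk₀d' : 2*δ ≤ (k₀ : ℝ) * (τ - 16*δ) := (div_le_iff₀ hdrift).mp hk₀d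
    have hpk₀ : p k₀ ≤ 0 := by
      have h1 := hlin k₀
      have h2 : σ + 14*δ ≤ -(τ - 16*δ) := by linarith
      have h3 : (k₀:ℝ) * (σ + 14*δ) ≤ (k₀:ℝ) * (-(τ - 16*δ)) :=
        mul_le_mul_of_nonneg_left h2 (Nat.cast_nonneg k₀)
      have h4 : p 0 ≤ 2*δ := le_trans (le_abs_self _) hp0
      nlinarith
    set t := max N₁ 0 with ht
    have htN : N₁ ≤ t := le_max_left _ _
    have htnn : (0:ℝ) ≤ t := le_max_right _ _
    have hmN : N₁ ≤ ((k₀ * n : ℕ) : ℝ) := by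
      calc N₁ ≤ (k₀ : ℝ) := hk₀N
      _ ≤ ((k₀ * n : ℕ) : ℝ) := by
          have h1 : k₀ ≤ k₀ * n := Nat.le_mul_of_pos_right k₀ hn1
          exact_mod_cast Nat.cast_le.mpr h1
    have hlow := hN₁ (k₀ * n) t hmN htN
    have hmove := gp_move_left ((A ^ (k₀*n)) (L 0)) (L (p k₀)) (L t) (L 0)
    rw [gp_line_mixed hline hpk₀ htnn] at hmove
    linarith [hp k₀]
end Orient

section Final
variable {X : Type*} [MetricSpace X]

lemma disp_pow (C : X ≃ᵢ X) (x : X) {c : ℝ} (hc : dist (C x) x ≤ c) :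
    ∀ m : ℕ, dist ((C ^ m) x) x ≤ m * c := by
  intro m
  induction m with
  | zero => simp
  | succ m ih =>
    have he : ((C : X ≃ᵢ X) ^ (m+1)) x = (C ^ m) (C x) := by rw [pow_succ]; rfl
    calc dist ((C ^ (m+1)) x) x ≤ dist ((C ^ (m+1)) x) ((C ^ m) x) + dist ((C ^ m) x) x :=
        dist_triangle _ _ _
    _ ≤ c + m * c := by
        rw [he, (C ^ m).dist_eq]
        exact add_le_add hc ih
    _ = (m + 1 : ℕ) * c := by push_cast; ring

lemma stable_le (A : X ≃ᵢ X) (x : X) {lA : ℝ}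
    (hlA : Filter.Tendsto (fun m : ℕ => dist ((A ^ m) x) x / m) Filter.atTop (nhds lA))
    (n : ℕ) (hn : 1 ≤ n) : (n : ℝ) * lA ≤ dist ((A ^ n) x) x := by
  set τ' := dist ((A ^ n) x) x with hτ'
  have hτnn : 0 ≤ τ' := dist_nonneg
  have hsub : ∀ m : ℕ, dist ((A ^ (n*m)) x) x ≤ m * τ' := by
    intro m
    have := disp_pow (A ^ n) x (le_refl τ') m
    rwa [← pow_mul] at this
  have hmul : Filter.Tendsto (fun k : ℕ => n * k) Filter.atTop Filter.atTop :=
    Filter.tendsto_atTop_mono (fun k => Nat.le_mul_of_pos_left k hn) Filter.tendsto_id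
  have htend : Filter.Tendsto (fun k : ℕ => dist ((A ^ (n*k)) x) x / (n*k : ℕ))
      Filter.atTop (nhds lA) := hlA.comp hmul
  have hev : ∀ᶠ k : ℕ in Filter.atTop, dist ((A ^ (n*k)) x) x / ((n*k : ℕ) : ℝ) ≤ τ' / n := by
    filter_upwards [Filter.eventually_ge_atTop 1] with k hk
    have hknn : (0:ℝ) < (k : ℝ) := by exact_mod_cast hk
    have hnnn : (0:ℝ) < (n : ℝ) := by exact_mod_cast hn
    have hcast : ((n*k : ℕ) : ℝ) = (n:ℝ) * k := by push_cast; ring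
    rw [hcast, div_le_div_iff₀ (by positivity) hnnn]
    have := hsub k
    nlinarith
  have hle : lA ≤ τ' / n := le_of_tendsto htend hev
  have hnnn : (0:ℝ) < (n : ℝ) := by exact_mod_cast hn
  rw [le_div_iff₀ hnnn] at hle
  linarith

end Final

/-- If `A` is a hyperbolic isometry, `L` a geodesic from `A⁻` to `A⁺` with
`o = L 0`, and `B` an isometry with `B(A⁺) = A⁻` (encoded by the Gromov products
`(B Aⁿ o | A⁻ᵐ o)_o` tending to `+∞` as `min(n,m) → +∞`), then with
`N = (1/l_S(A)) · max{3 d(Bo,o) + 18δ, 5 d(Bo,o) + 10δ}`, for every integer `n ≥ N`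
one has `l_S(Aⁿ B) ≤ 30δ`. -/
theorem stable_norm_AnB_bounded
    {X : Type*} [MetricSpace X] (δ : ℝ) (hδ : 0 ≤ δ)
    (hgeo : GeodesicMetricSpace X) (hhyp : RipsHyperbolic X δ)
    (A B : X ≃ᵢ X) (L : ℝ → X) (hL : IsGeodesicFromTo A L)
    (o : X) (ho : o = L 0)
    (lA : ℝ)
    (hlA : Tendsto (fun n : ℕ => dist ((A ^ n) o) o / n) atTop (𝓝 lA)) (hlA0 : 0 < lA)
    (hBA : ∀ K : ℝ, ∃ N : ℝ, ∀ n m : ℕ, N ≤ (n : ℝ) → N ≤ (m : ℝ) →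
      K ≤ gromovProd (B ((A ^ n) o)) ((A⁻¹ ^ m) o) o)
    (lAnB : ℕ → ℝ)
    (hlAnB : ∀ n : ℕ,
      Tendsto (fun m : ℕ => dist (((A ^ n * B) ^ m) o) o / m) atTop (𝓝 (lAnB n))) :
    ∀ n : ℕ,
      (1 / lA) * max (3 * dist (B o) o + 18 * δ) (5 * dist (B o) o + 10 * δ) ≤ (n : ℝ) →
      lAnB n ≤ 30 * δ := by
  subst ho
  intro n hn
  set D := dist (B (L 0)) (L 0) with hD
  have hDnn : 0 ≤ D := dist_nonneg
  have hline := hL.1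
  have hdL0 : ∀ a : ℝ, dist (L 0) (L a) = |a| := by
    intro a; rw [hline, abs_sub_comm]; simp
  have hmax : max (3 * D + 18 * δ) (5 * D + 10 * δ) ≤ (n : ℝ) * lA := by
    have h1 : (1 / lA) * max (3 * D + 18 * δ) (5 * D + 10 * δ) ≤ (n : ℝ) := hn
    have h2 := mul_le_mul_of_nonneg_left h1 (le_of_lt hlA0)
    rw [← mul_assoc, mul_one_div, div_self (ne_of_gt hlA0), one_mul] at h2
    linarith [h2]
  rcases Nat.eq_zero_or_pos n with hn0 | hn1
  · -- n = 0 : then D = 0 and δ = 0 and B fixes L 0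
    subst hn0
    have hz : max (3 * D + 18 * δ) (5 * D + 10 * δ) ≤ 0 := by
      simpa using hmax
    have h3 : 3 * D + 18 * δ ≤ 0 := le_trans (le_max_left _ _) hz
    have hD0 : D = 0 := by linarith
    have hδ0 : δ = 0 := by linarith
    have hBfix : B (L 0) = L 0 := by
      have : dist (B (L 0)) (L 0) = 0 := by rw [← hD, hD0]
      exact dist_eq_zero.mp this
    have hpow : ∀ m : ℕ, ((A ^ 0 * B) ^ m) (L 0) = L 0 := by
      intro m
      induction m with
      | zero => simp
      | succ m ih =>
        have he : ((A ^ 0 * B : X ≃ᵢ X) ^ (m+1)) (L 0) =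
            (A ^ 0 * B) (((A ^ 0 * B : X ≃ᵢ X) ^ m) (L 0)) := by rw [pow_succ']; rfl
        rw [he, ih]
        simp only [pow_zero, one_mul]
        exact hBfix
    have hconst : Tendsto (fun m : ℕ => dist (((A ^ 0 * B) ^ m) (L 0)) (L 0) / m) atTop (𝓝 0) := by
      have : (fun m : ℕ => dist (((A ^ 0 * B) ^ m) (L 0)) (L 0) / m) = fun m : ℕ => (0:ℝ) := by
        funext m; rw [hpow m]; simp
      rw [this]
      exact tendsto_const_nhds
    have := tendsto_nhds_unique (hlAnB 0) hconst
    rw [this, hδ0]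
    norm_num
  · -- main case n ≥ 1
    set τ := dist (L 0) ((A ^ n) (L 0)) with hτ
    have hτ' : τ = dist ((A ^ n) (L 0)) (L 0) := dist_comm _ _
    have hτge : max (3 * D + 18 * δ) (5 * D + 10 * δ) ≤ τ := by
      have := stable_le A (L 0) hlA n hn1
      rw [hτ']
      linarith
    have hτ3 : 3 * D + 18 * δ ≤ τ := le_trans (le_max_left _ _) hτge
    have h18 : 18 * δ ≤ τ := by linarith
    obtain ⟨σ, hσ⟩ := travel hδ hgeo hhyp hL n 0
    have hσpos : τ - 2*δ ≤ σ := sigma_pos hδ hgeo hhyp hL n hσ (by rw [← hτ]; exact h18)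
    -- the key displacement estimate
    have hkey : ∀ h : ℝ, 0 < h → ∃ x : X, dist ((A ^ n * B) x) x ≤ 12*δ + 2*h := by
      intro h hh
      set t₀ := D + 2*δ with ht₀
      set s : ℕ → ℝ := fun j => t₀ + j*h with hs
      have hsD : ∀ j : ℕ, D ≤ s j := by
        intro j
        have : (0:ℝ) ≤ (j:ℝ)*h := by positivity
        simp only [hs, ht₀]
        linarith
      have HΨ : ∀ j : ℕ, ∃ ψ, ψ ≤ 0 ∧ dist (B (L (s j))) (L ψ) ≤ 2*δ :=
        fun j => travelB hδ hgeo hhyp hL hBA (s j) (hsD j)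
      choose ψ hψ0 hψd using HΨ
      have HQ : ∀ j : ℕ, ∃ q, dist ((A ^ n) (L (ψ j))) (L q) ≤ 2*δ ∧ |q - ψ j - σ| ≤ 8*δ :=
        fun j => travel_affine hδ hgeo hhyp hL n hσ (ψ j)
      choose q hq1 hq2 using HQ
      have hCq : ∀ j : ℕ, dist ((A ^ n * B) (L (s j))) (L (q j)) ≤ 4*δ := by
        intro j
        have he : (A ^ n * B) (L (s j)) = (A ^ n) (B (L (s j))) := rfl
        rw [he]
        calc dist ((A ^ n) (B (L (s j)))) (L (q j)) ≤
            dist ((A ^ n) (B (L (s j)))) ((A ^ n) (L (ψ j))) + dist ((A ^ n) (L (ψ j))) (L (q j)) :=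
            dist_triangle _ _ _
        _ ≤ 2*δ + 2*δ := by
            rw [(A ^ n).dist_eq]
            exact add_le_add (hψd j) (hq1 j)
        _ = 4*δ := by ring
      set G : ℕ → ℝ := fun j => q j - s j with hG
      have hψlow : ∀ j : ℕ, -(D + s j + 2*δ) ≤ ψ j := by
        intro j
        have habs : |ψ j| ≤ D + s j + 2*δ := by
          rw [← hdL0 (ψ j)]
          calc dist (L 0) (L (ψ j)) ≤ dist (L 0) (B (L (s j))) + dist (B (L (s j))) (L (ψ j)) :=
              dist_triangle _ _ _
          _ ≤ (D + s j) + 2*δ := by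
              refine add_le_add ?_ (hψd j)
              calc dist (L 0) (B (L (s j))) ≤ dist (L 0) (B (L 0)) + dist (B (L 0)) (B (L (s j))) :=
                  dist_triangle _ _ _
              _ ≤ D + s j := by
                  rw [B.dist_eq, hline]
                  have : |0 - s j| = s j := by
                    rw [abs_of_nonpos (by linarith [hsD j] : (0:ℝ) - s j ≤ 0)]; ring
                  rw [dist_comm (L 0) (B (L 0)), ← hD, this]
          _ = D + s j + 2*δ := by ring
        linarith [neg_abs_le (ψ j)]
      have hG0 : 0 ≤ G 0 := by
        have h1 : ψ 0 + σ - 8*δ ≤ q 0 := by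
          have := neg_abs_le (q 0 - ψ 0 - σ)
          have h2 := hq2 0
          linarith
        have h2 := hψlow 0
        have hs0 : s 0 = t₀ := by simp only [hs]; push_cast; ring
        have hGeq : G 0 = q 0 - s 0 := rfl
        rw [hGeq, hs0, ht₀]
        linarith
      have hstep : ∀ j : ℕ, G j - (2*h + 8*δ) ≤ G (j+1) := by
        intro j
        have hqd : |q (j+1) - q j| ≤ h + 8*δ := by
          rw [← hline]
          calc dist (L (q (j+1))) (L (q j)) ≤
              dist (L (q (j+1))) ((A ^ n * B) (L (s (j+1)))) +
              dist ((A ^ n * B) (L (s (j+1)))) ((A ^ n * B) (L (s j))) +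
              dist ((A ^ n * B) (L (s j))) (L (q j)) := dist_triangle4 _ _ _ _
          _ ≤ 4*δ + h + 4*δ := by
              refine add_le_add (add_le_add ?_ ?_) (hCq j)
              · rw [dist_comm]; exact hCq (j+1)
              · rw [(A ^ n * B).dist_eq, hline]
                have : s (j+1) - s j = h := by simp only [hs]; push_cast; ring
                rw [this, abs_of_pos hh]
          _ = h + 8*δ := by ring
        have h1 : q j - (h + 8*δ) ≤ q (j+1) := by
          have := neg_abs_le (q (j+1) - q j)
          linarith
        have h2 : s (j+1) = s j + h := by simp only [hs]; push_cast; ring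
        simp only [hG]
        rw [h2]
        linarith
      have hqup : ∀ j : ℕ, q j ≤ σ + 8*δ := by
        intro j
        have h1 := le_abs_self (q j - ψ j - σ)
        have h2 := hq2 j
        have h3 := hψ0 j
        linarith
      have hex : ∃ j : ℕ, G j ≤ 0 := by
        obtain ⟨J, hJ⟩ := exists_nat_ge ((σ + 8*δ - t₀)/h)
        refine ⟨J, ?_⟩
        have h1 : σ + 8*δ - t₀ ≤ (J:ℝ)*h := by
          rw [div_le_iff₀ hh] at hJ
          linarith
        have h2 := hqup J
        simp only [hG, hs]
        linarith
      classical
      set j₀ := Nat.find hex with hj₀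
      have hGj₀ : G j₀ ≤ 0 := Nat.find_spec hex
      have hGlow : -(2*h + 8*δ) ≤ G j₀ := by
        rcases Nat.eq_zero_or_pos j₀ with h0 | hpos
        · rw [h0]
          have : (0:ℝ) < 2*h + 8*δ := by linarith
          linarith [hG0]
        · have hj₁ : j₀ - 1 < j₀ := Nat.sub_lt hpos Nat.one_pos
          have hnot : ¬ (G (j₀ - 1) ≤ 0) := Nat.find_min hex hj₁
          push_neg at hnot
          have := hstep (j₀ - 1)
          rw [Nat.sub_add_cancel hpos] at this
          linarith
      refine ⟨L (s j₀), ?_⟩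
      calc dist ((A ^ n * B) (L (s j₀))) (L (s j₀)) ≤
          dist ((A ^ n * B) (L (s j₀))) (L (q j₀)) + dist (L (q j₀)) (L (s j₀)) :=
          dist_triangle _ _ _
      _ ≤ 4*δ + |q j₀ - s j₀| := by
          rw [hline]
          exact add_le_add (hCq j₀) (le_refl _)
      _ ≤ 4*δ + (2*h + 8*δ) := by
          refine add_le_add (le_refl _) ?_
          have hGeq : G j₀ = q j₀ - s j₀ := rfl
          rw [abs_le]
          constructor
          · linarith [hGlow, hGeq]
          · linarith [hGj₀, hGeq]
      _ = 12*δ + 2*h := by ring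
    -- conclude : stable norm bound
    have hfinal : ∀ ε : ℝ, 0 < ε → lAnB n ≤ 12*δ + ε := by
      intro ε hε
      obtain ⟨x, hx⟩ := hkey (ε/4) (by linarith)
      have hdisp : ∀ m : ℕ, dist (((A ^ n * B) ^ m) (L 0)) (L 0) ≤
          m * (12*δ + 2*(ε/4)) + 2 * dist (L 0) x := by
        intro m
        have h1 := disp_pow (A ^ n * B) x hx m
        calc dist (((A ^ n * B) ^ m) (L 0)) (L 0) ≤
            dist (((A ^ n * B) ^ m) (L 0)) (((A ^ n * B) ^ m) x) +
            dist (((A ^ n * B) ^ m) x) x + dist x (L 0) := dist_triangle4 _ _ _ _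
        _ ≤ dist (L 0) x + (m * (12*δ + 2*(ε/4))) + dist x (L 0) := by
            rw [((A ^ n * B) ^ m).dist_eq]
            exact add_le_add (add_le_add (le_refl _) h1) (le_refl _)
        _ = m * (12*δ + 2*(ε/4)) + 2 * dist (L 0) x := by
            rw [dist_comm x (L 0)]; ring
      have hg : Tendsto (fun m : ℕ => (12*δ + 2*(ε/4)) + 2 * dist (L 0) x / m) atTop
          (𝓝 ((12*δ + 2*(ε/4)) + 0)) :=
        tendsto_const_nhds.add (tendsto_const_nhds.div_atTop tendsto_natCast_atTop_atTop)
      have hev : ∀ᶠ m : ℕ in atTop, dist (((A ^ n * B) ^ m) (L 0)) (L 0) / m ≤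
          (12*δ + 2*(ε/4)) + 2 * dist (L 0) x / m := by
        filter_upwards [eventually_ge_atTop 1] with m hm
        have hm0 : (0:ℝ) < (m:ℝ) := by exact_mod_cast hm
        rw [div_le_iff₀ hm0]
        have hdm := hdisp m
        have heq : (12*δ + 2*(ε/4) + 2 * dist (L 0) x / (m:ℝ)) * (m:ℝ) =
            (m:ℝ)*(12*δ+2*(ε/4)) + 2 * dist (L 0) x := by
          field_simp
        rw [heq]
        linarith
      have := le_of_tendsto_of_tendsto (hlAnB n) hg hev
      rw [add_zero] at this
      linarith
    have h12 : lAnB n ≤ 12*δ := by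
      by_contra hc
      push_neg at hc
      have := hfinal ((lAnB n - 12*δ)/2) (by linarith)
      linarith
    linarith
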